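/- arXiv:1302.3722 — 3 statements merged into one kernel-verified Lean document; each statement's English description precedes it below -/
import Mathlib

section
/- Let w = 0^i (1 0)^k 1 0^j be a binary word of length n+1 with i, j ≥ 0 and k ≥ 1. Then w is generated by exactly one ordered pair (u,v) with u, v ∈ St(n,α) for some common slope α ∈ (0,1/2). -/
open scoped Classical

/-- Membership of `x` in the circular interval `[β,γ)`: it means `β ≤ x < γ`
when `β < γ`; `x ≥ β` or `x < γ` when `γ < β`; and never holds when `β = γ`. -/
def inCirc (β γ x : ℝ) : Prop :=
  if β < γ then β ≤ x ∧ x < γ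
  else if γ < β then β ≤ x ∨ x < γ
  else False

/-- The rotation word `r(α,β,γ,n)` as a list of booleans of length `n`:
its `i`-th letter is `1` iff the fractional part `{iα}` lies in `[β,γ)`. -/
noncomputable def rotWord (α β γ : ℝ) (n : ℕ) : List Bool :=
  (List.range n).map fun i => if inCirc β γ (Int.fract (i * α)) then true else false

/-- The set `R(n)` of all rotation words of length `n`. -/
def RotWords (n : ℕ) : Set (List Bool) :=
  {w | ∃ α ∈ Set.Ico (0:ℝ) 1, ∃ β ∈ Set.Ico (0:ℝ) 1, ∃ γ ∈ Set.Ico (0:ℝ) 1,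
    w = rotWord α β γ n}

/-- `numRot n = f(n)` is the number of binary rotation words of length `n`. -/
noncomputable def numRot (n : ℕ) : ℕ := (RotWords n).ncard

/-- The set `St(n,α)` of Sturmian words of length `n` and slope `α`:
rotation words `r(α,β,{β+α},n)`, `β ∈ [0,1)`. -/
def St (n : ℕ) (α : ℝ) : Set (List Bool) :=
  {w | ∃ β ∈ Set.Ico (0:ℝ) 1, w = rotWord α β (Int.fract (β + α)) n}

/-- The ordered pair `(u,v)` of words of length `n` generates the word `r` of
length `n+1`: regarding letters as integers, `r_{k+1} = r_k + u_k - v_k`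
for every `0 ≤ k ≤ n-1`. -/
def Generates (u v r : List Bool) : Prop :=
  ∀ k, k < u.length →
    ((r.getD (k+1) false).toNat : ℤ) =
      ((r.getD k false).toNat : ℤ) + ((u.getD k false).toNat : ℤ)
        - ((v.getD k false).toNat : ℤ)

/-- The set of ordered pairs `(u,v)` of Sturmian words of length `n` with a
common slope `α ∈ (0,1/2)` that generate the word `r`. -/
def GenPairs (n : ℕ) (r : List Bool) : Set (List Bool × List Bool) :=
  {p | ∃ α ∈ Set.Ioo (0:ℝ) (1/2 : ℝ), p.1 ∈ St n α ∧ p.2 ∈ St n α ∧ Generates p.1 p.2 r}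

/-- The word `0^i (1 0^l)^k 1 0^j`. -/
def pat0 (i l k j : ℕ) : List Bool :=
  List.replicate i false ++ (List.replicate k (true :: List.replicate l false)).flatten
    ++ [true] ++ List.replicate j false

/-! ### Auxiliary lemmas -/

section Aux

/-- fract of (fract z + w) -/
lemma fract_fract_add (z w : ℝ) : Int.fract (Int.fract z + w) = Int.fract (z + w) := by
  have h : Int.fract z + w = (z + w) - (⌊z⌋ : ℤ) := by rw [Int.fract]; ring
  rw [h, Int.fract_sub_intCast]

lemma floor_sub_indicator (Y η : ℝ) (h0 : 0 ≤ η) (h1 : η < 1) :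
    (⌊Y⌋ - ⌊Y - η⌋ : ℤ) = if Int.fract Y < η then 1 else 0 := by
  have hY : Y - η = (⌊Y⌋ : ℤ) + (Int.fract Y - η) := by rw [Int.fract]; push_cast; ring
  rw [hY, Int.floor_intCast_add]
  by_cases h : Int.fract Y < η
  · have : ⌊Int.fract Y - η⌋ = -1 := by
      rw [Int.floor_eq_iff (R := ℝ)]
      constructor
      · push_cast
        have := Int.fract_nonneg Y
        linarith
      · push_cast
        linarith
    rw [this, if_pos h]; ring
  · have h2 : ⌊Int.fract Y - η⌋ = 0 := by
      rw [Int.floor_eq_zero_iff]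
      simp only [Set.mem_Ico]
      have := Int.fract_lt_one Y
      simp only [not_lt] at h
      constructor <;> linarith
    rw [h2, if_neg h]; ring

lemma decide_fract_toNat (x α : ℝ) (h0 : 0 ≤ α) (h1 : α < 1) :
    ((decide (Int.fract x < α)).toNat : ℤ) = ⌊x⌋ - ⌊x - α⌋ := by
  rw [floor_sub_indicator x α h0 h1]
  by_cases h : Int.fract x < α <;> simp [h]

lemma flatMap_cast_map (n : ℕ) (f : ℝ → Bool) :
    List.map f ((List.range n).flatMap fun a => [(a:ℝ)])
      = List.map (fun i : ℕ => f i) (List.range n) := by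
  induction n with
  | zero => simp
  | succ n ih => rw [List.range_succ]; simp_all

lemma rotWord_eq (α β γ : ℝ) (n : ℕ) :
    rotWord α β γ n = (List.range n).map
      (fun i : ℕ => if inCirc β γ (Int.fract ((i:ℝ) * α)) then true else false) := by
  unfold rotWord
  simp [List.map_flatMap]
  exact List.flatMap_pure_eq_map _ _

/-- getD of a mapped range list -/
lemma map_range_getD (f : ℕ → Bool) (n m : ℕ) (hm : m < n) (d : Bool) :
    ((List.range n).map f).getD m d = f m := by
  rw [List.getD_eq_getElem _ _ (by simpa using hm)]
  simp

lemma rot_length (α β γ : ℝ) (n : ℕ) : (rotWord α β γ n).length = n := by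
  rw [rotWord_eq, List.length_map, List.length_range]

/-- the letter of a Sturmian rotation word -/
lemma rot_letter (α β : ℝ) (hα0 : 0 < α) (hα1 : α < 1) (hβ0 : 0 ≤ β) (hβ1 : β < 1)
    (n m : ℕ) (hm : m < n) :
    (rotWord α β (Int.fract (β + α)) n).getD m false
      = decide (Int.fract ((m:ℝ) * α - β) < α) := by
  rw [rotWord_eq, map_range_getD _ n m hm]
  have hx0 : 0 ≤ Int.fract ((m:ℝ) * α) := Int.fract_nonneg _
  have hx1 : Int.fract ((m:ℝ) * α) < 1 := Int.fract_lt_one _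
  set x := Int.fract ((m:ℝ) * α) with hxdef
  have key : inCirc β (Int.fract (β + α)) x ↔ Int.fract ((m:ℝ) * α - β) < α := by
    have hfr : Int.fract (x - β) = Int.fract ((m:ℝ) * α - β) := by
      rw [hxdef]
      have h : Int.fract ((m:ℝ) * α) - β = ((m:ℝ) * α - β) - (⌊(m:ℝ)*α⌋ : ℤ) := by
        rw [Int.fract]; ring
      rw [h, Int.fract_sub_intCast]
    rw [← hfr]
    by_cases hcase : β + α < 1
    · have hγ : Int.fract (β + α) = β + α := Int.fract_eq_self.2 ⟨by linarith, hcase⟩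
      rw [hγ]
      unfold inCirc
      rw [if_pos (by linarith : β < β + α)]
      by_cases hxβ : β ≤ x
      · have h2 : Int.fract (x - β) = x - β := Int.fract_eq_self.2 ⟨by linarith, by linarith⟩
        rw [h2]
        constructor
        · rintro ⟨-, h2⟩; linarith
        · intro h; exact ⟨hxβ, by linarith⟩
      · push_neg at hxβ
        have h2 : Int.fract (x - β) = x - β + 1 := by
          have h1 : Int.fract (x - β) = Int.fract (x - β + 1) := by
            rw [← Int.fract_add_intCast (x - β) 1]; norm_num
          rw [h1]; exact Int.fract_eq_self.2 ⟨by linarith, by linarith⟩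
        rw [h2]
        constructor
        · rintro ⟨h1, -⟩; linarith
        · intro h; exfalso; linarith
    · push_neg at hcase
      have hγ : Int.fract (β + α) = β + α - 1 := by
        have h1 : Int.fract (β + α) = Int.fract (β + α - 1) := by
          rw [← Int.fract_sub_intCast (β + α) 1]; norm_num
        rw [h1]; exact Int.fract_eq_self.2 ⟨by linarith, by linarith⟩
      rw [hγ]
      unfold inCirc
      rw [if_neg (by linarith), if_pos (by linarith)]
      by_cases hxβ : β ≤ x
      · have h2 : Int.fract (x - β) = x - β := Int.fract_eq_self.2 ⟨by linarith, by linarith⟩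
        rw [h2]
        constructor
        · intro _; linarith
        · intro _; left; exact hxβ
      · push_neg at hxβ
        have h2 : Int.fract (x - β) = x - β + 1 := by
          have h1 : Int.fract (x - β) = Int.fract (x - β + 1) := by
            rw [← Int.fract_add_intCast (x - β) 1]; norm_num
          rw [h1]; exact Int.fract_eq_self.2 ⟨by linarith, by linarith⟩
        rw [h2]
        constructor
        · rintro (h | h)
          · exfalso; linarith
          · linarith
        · intro h; right; linarith
  by_cases h : inCirc β (Int.fract (β + α)) x
  · rw [if_pos h]; exact (decide_eq_true (key.1 h)).symm
  · rw [if_neg h]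
    have h3 : ¬ (Int.fract ((m:ℝ) * α - β) < α) := fun hc => h (key.2 hc)
    simp [h3]

lemma bool_toNat_inj (a b : Bool) (h : ((a.toNat : ℤ)) = b.toNat) : a = b := by
  cases a <;> cases b <;> simp_all

end Aux

/-! ### The pattern word -/

section Pat

lemma flat_len (k : ℕ) :
    ((List.replicate k (true :: List.replicate 1 false)).flatten).length = 2*k := by
  induction k with
  | zero => simp
  | succ k ih =>
      rw [List.replicate_succ, List.flatten_cons, List.length_append, ih]
      simp; omega

lemma pat_len (i k j : ℕ) : (pat0 i 1 k j).length = i + 2*k + 1 + j := by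
  simp [pat0, flat_len]
  omega

lemma pat_getD (i k j p : ℕ) :
    (pat0 i 1 k j).getD p false = true ↔ (i ≤ p ∧ p ≤ i + 2*k ∧ (p - i) % 2 = 0) := by
  induction i generalizing p with
  | zero =>
      induction k generalizing p with
      | zero =>
          have h : pat0 0 1 0 j = true :: List.replicate j false := by simp [pat0]
          rw [h]
          match p with
          | 0 => simp
          | (q+1) =>
              simp only [List.getD_cons_succ]
              constructor
              · intro hq
                exfalso
                have h0 : (List.replicate j false).getD q false = false := by
                  rcases lt_or_ge q j with h' | h'
                  · rw [List.getD_eq_getElem _ false (by simpa using h')]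
                    simp
                  · rw [List.getD_eq_default _ false (by simpa using h')]
                rw [h0] at hq; exact Bool.false_ne_true hq
              · omega
      | succ k ihk =>
          have h : pat0 0 1 (k+1) j = true :: false :: pat0 0 1 k j := by
            simp [pat0]
            rw [List.replicate_succ, List.flatten_cons]
            simp
          rw [h]
          match p with
          | 0 => simp
          | 1 => simp
          | (q+2) =>
              simp only [List.getD_cons_succ]
              rw [ihk q]
              omega
  | succ i ihi =>
      have h : pat0 (i+1) 1 k j = false :: pat0 i 1 k j := by
        simp [pat0, List.replicate_succ]
      rw [h]
      match p with
      | 0 => simp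
      | (q+1) =>
          simp only [List.getD_cons_succ]
          rw [ihi q]
          omega

end Pat

section Key

/-- Core rigidity lemma: the letters of the first word of a generating pair
are completely determined. -/
lemma key_letters (n i k j : ℕ) (hk : 1 ≤ k) (hn : n = i + 2*k + j)
    (α β η : ℝ) (hα0 : 0 < α) (hα2 : 2*α < 1) (hη1 : η < 1)
    (hdia : ∀ p, p ≤ n → ((∃ t, t ≤ k ∧ p = i + 2*t) ↔
      Int.fract (((p:ℝ) - 1)*α - β) < η)) :
    ∀ m, m < n → (Int.fract ((m:ℝ)*α - β) < α ↔
      ((m % 2 = (i+1) % 2 ∧ m + 1 ≤ i + 2*k) ∨ (m % 2 = i % 2 ∧ i + 2*k + 2 ≤ m))) := by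
  set q : ℝ := 1 - 2*α with hqdef
  have hq0 : 0 < q := by simp only [hqdef]; linarith
  set y : ℕ → ℝ := fun p => Int.fract (((p:ℝ) - 1)*α - β) with hydef
  have y0 : ∀ p : ℕ, 0 ≤ y p := fun p => Int.fract_nonneg _
  have y1 : ∀ p : ℕ, y p < 1 := fun p => Int.fract_lt_one _
  have yrep : ∀ m : ℕ, Int.fract ((m:ℝ)*α - β) = y (m+1) := by
    intro m; simp only [hydef]; congr 1; push_cast; ring
  have ysucc : ∀ p : ℕ, y (p+1) = y p + α ∨ y (p+1) = y p + α - 1 := by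
    intro p
    have h1 : y (p+1) = Int.fract (y p + α) := by
      simp only [hydef]
      rw [fract_fract_add]
      congr 1
      push_cast
      ring
    rcases lt_or_ge (y p + α) 1 with h | h
    · left; rw [h1]; exact Int.fract_eq_self.2 ⟨by linarith [y0 p], h⟩
    · right; rw [h1]
      have h2 : Int.fract (y p + α) = Int.fract (y p + α - 1) := by
        rw [← Int.fract_sub_intCast (y p + α) 1]; norm_num
      rw [h2]; exact Int.fract_eq_self.2 ⟨by linarith, by linarith [y1 p]⟩
  have memA : ∀ t, t ≤ k → y (i + 2*t) < η := by
    intro t ht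
    exact (hdia _ (by omega)).1 ⟨t, ht, rfl⟩
  have memB : ∀ p, p ≤ n → (¬ ∃ t, t ≤ k ∧ p = i + 2*t) → η ≤ y p := by
    intro p hp hne
    by_contra h
    push_neg at h
    exact hne ((hdia p hp).2 h)
  have hyi : y i < η := by
    have := memA 0 (Nat.zero_le k); simpa using this
  have hη0 : 0 < η := lt_of_le_of_lt (y0 i) hyi
  have cb : ∀ t, t ≤ k → i + 2*t + 1 ≤ n → y (i + 2*t + 1) = y (i + 2*t) + α := by
    intro t ht hle
    rcases ysucc (i + 2*t) with h | h
    · exact h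
    · exfalso
      have hb := memB (i+2*t+1) hle (by rintro ⟨s, hs, he⟩; omega)
      have := memA t ht
      linarith
  have ct : ∀ t, t ≤ k → y (i + 2*t) = y i - t*q := by
    intro t
    induction t with
    | zero => intro _; simp
    | succ t ih =>
        intro ht
        have ht' : t ≤ k := by omega
        have h1 := cb t ht' (by omega)
        have hb := memB (i+2*t+1) (by omega) (by rintro ⟨s, hs, he⟩; omega)
        have hA := memA (t+1) ht
        have he : i + 2*t + 1 + 1 = i + 2*(t+1) := by omega
        have hstep := ysucc (i + 2*t + 1)
        rw [he] at hstep
        rcases hstep with h | h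
        · exfalso; linarith
        · rw [h, h1, ih ht']
          push_cast
          simp only [hqdef]
          ring
  have hyM : y (i + 2*k) = y i - k*q := ct k le_rfl
  have hkq : (k:ℝ)*q ≤ y i := by
    have := y0 (i+2*k); rw [hyM] at this; linarith
  have hqη : q < η := by
    have hk1 : (1:ℝ) ≤ (k:ℝ) := by exact_mod_cast hk
    nlinarith
  have hyi1 : y i < 1 - α := by
    have h1 := cb 0 (Nat.zero_le k) (by omega)
    have h2 := y1 (i + 2*0 + 1)
    rw [h1] at h2
    have h3 : y (i + 2*0) = y i := by norm_num
    rw [h3] at h2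
    linarith
  -- prefix rigidity
  have pre : ∀ d, (∀ p, p + 2*d + 1 = i → y p = y i + (1 - α) + d*q)
      ∧ (∀ p, p + 2*d + 2 = i → y p = y i + (d+1)*q) := by
    intro d
    induction d with
    | zero =>
        have hodd : ∀ p, p + 2*0 + 1 = i → y p = y i + (1 - α) + (0:ℕ)*q := by
          intro p hp
          have hp1 : p + 1 = i := by omega
          have hb := memB p (by omega) (by rintro ⟨s, hs, he⟩; omega)
          rcases ysucc p with h | h
          · exfalso
            rw [hp1] at h
            linarith
          · rw [hp1] at h
            push_cast
            linarith
        refine ⟨hodd, ?_⟩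
        intro p hp
        have h2 := hodd (p+1) (by omega)
        push_cast at h2 ⊢
        rcases ysucc p with h | h
        · rw [h2] at h
          simp only [hqdef]
          linarith
        · exfalso
          rw [h2] at h
          have := y1 p
          have := y0 i
          linarith
    | succ d ih =>
        have hodd : ∀ p, p + 2*(d+1) + 1 = i → y p = y i + (1 - α) + ((d:ℝ)+1)*q := by
          intro p hp
          have hev := ih.2 (p+1) (by omega)
          have hbd : y i + (d:ℝ)*q < α := by
            have h1 := ih.1 (p+2) (by omega)
            have h2 := y1 (p+2)
            rw [h1] at h2
            linarith
          have hb := memB p (by omega) (by rintro ⟨s, hs, he⟩; omega)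
          push_cast at hev
          rcases ysucc p with h | h
          · exfalso
            rw [hev] at h
            -- y p = y i + (d+1) q - α < q < η ≤ y p
            have hlt : y p < q := by linarith
            linarith
          · rw [hev] at h
            linarith
        refine ⟨by intro p hp; have := hodd p hp; push_cast; linarith [this], ?_⟩
        intro p hp
        have ho := hodd (p+1) (by omega)
        push_cast
        rcases ysucc p with h | h
        · rw [ho] at h
          simp only [hqdef] at h ⊢
          linarith
        · exfalso
          rw [ho] at h
          have h1 := y1 p
          have h2 := y0 i
          have h3 : 0 ≤ ((d:ℝ)+1)*q := by positivity
          linarith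
  -- suffix rigidity
  have suf : ∀ s, (i+2*k+2*s+1 ≤ n → y (i+2*k+2*s+1) = y (i+2*k) + α - s*q)
      ∧ (i+2*k+2*s+2 ≤ n → y (i+2*k+2*s+2) = y (i+2*k) + 2*α - s*q) := by
    intro s
    induction s with
    | zero =>
        have hodd : i+2*k+2*0+1 ≤ n → y (i+2*k+2*0+1) = y (i+2*k) + α - (0:ℕ)*q := by
          intro hle
          have e0 : i+2*k+2*0+1 = (i+2*k)+1 := by omega
          rw [e0] at hle ⊢
          rcases ysucc (i+2*k) with h | h
          · rw [h]; push_cast; ring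
          · exfalso
            have hb := memB ((i+2*k)+1) hle (by rintro ⟨s, hs, he⟩; omega)
            have hA := memA k le_rfl
            linarith
        refine ⟨hodd, ?_⟩
        intro hle
        have h1 := hodd (by omega)
        have e0 : i+2*k+2*0+2 = (i+2*k+2*0+1)+1 := by omega
        rw [e0] at hle ⊢
        rcases ysucc (i+2*k+2*0+1) with h | h
        · rw [h, h1]; push_cast; ring
        · exfalso
          have hb := memB ((i+2*k+2*0+1)+1) hle (by rintro ⟨s, hs, he⟩; omega)
          have hA := memA k le_rfl
          rw [h, h1] at hb
          push_cast at hb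
          linarith
    | succ s ih =>
        have hodd : i+2*k+2*(s+1)+1 ≤ n → y (i+2*k+2*(s+1)+1) = y (i+2*k) + α - ((s:ℝ)+1)*q := by
          intro hle
          have hev := ih.2 (by omega)
          have hvo := ih.1 (by omega)
          have hmem := memB (i+2*k+2*s+1) (by omega) (by rintro ⟨s', hs', he⟩; omega)
          rw [hvo] at hmem
          have e0 : i+2*k+2*(s+1)+1 = (i+2*k+2*s+2)+1 := by omega
          rw [e0] at hle ⊢
          rcases ysucc (i+2*k+2*s+2) with h | h
          · exfalso
            rw [hev] at h
            have h1 := y1 ((i+2*k+2*s+2)+1)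
            rw [h] at h1
            simp only [hqdef] at h1 hmem
            linarith
          · rw [h, hev]
            simp only [hqdef] at h ⊢
            linarith
        refine ⟨by intro hle; rw [hodd hle]; push_cast; ring, ?_⟩
        intro hle
        have ho := hodd (by omega)
        have hA := memA k le_rfl
        have e0 : i+2*k+2*(s+1)+2 = (i+2*k+2*(s+1)+1)+1 := by omega
        rw [e0] at hle ⊢
        rcases ysucc (i+2*k+2*(s+1)+1) with h | h
        · rw [h, ho]
          push_cast
          ring
        · exfalso
          have hb := memB ((i+2*k+2*(s+1)+1)+1) hle (by rintro ⟨s', hs', he⟩; omega)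
          rw [h, ho] at hb
          push_cast at hb
          have hs0 : 0 ≤ ((s:ℝ)+1)*q := by positivity
          simp only [hqdef] at hb hs0
          linarith
  -- now the letter computation
  intro m hm
  rw [yrep m]
  by_cases hpre : m + 1 < i
  · rcases Nat.even_or_odd (i - (m+1)) with ⟨d, hd⟩ | ⟨d, hd⟩
    · -- i - (m+1) = d + d  (even), d ≥ 1
      obtain ⟨d', rfl⟩ : ∃ d'', d = d'' + 1 := ⟨d-1, by omega⟩
      have hval := (pre d').2 (m+1) (by omega)
      have hbnd := (pre (d'+1)).1 m (by omega)
      have h2 := y1 m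
      rw [hbnd] at h2
      push_cast at h2 hval
      have hlt : y (m+1) < α := by rw [hval]; linarith
      exact iff_of_true hlt (Or.inl ⟨by omega, by omega⟩)
    · -- i - (m+1) = 2d + 1 (odd)
      have hval := (pre d).1 (m+1) (by omega)
      have hge : ¬ (y (m+1) < α) := by
        push_neg
        rw [hval]
        have : 0 ≤ (d:ℝ)*q := by positivity
        linarith [y0 i]
      refine iff_of_false hge (by omega)
  · push_neg at hpre
    by_cases hcen : m + 1 ≤ i + 2*k + 1
    · rcases Nat.even_or_odd (m+1-i) with ⟨t, ht⟩ | ⟨t, ht⟩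
      · -- m+1 = i + 2t, t ≤ k
        have htk : t ≤ k := by omega
        have e0 : m + 1 = i + 2*t := by omega
        rw [e0]
        have hval := ct t htk
        rcases Nat.eq_zero_or_pos t with rfl | htpos
        · -- t = 0 : m+1 = i, need y i < α; requires i ≥ 1 i.e. m exists
          have h1 := (pre 0).1 m (by omega)
          have h2 := y1 m
          rw [h1] at h2
          push_cast at h2
          have hlt : y (i + 2*0) < α := by
            have e1 : i + 2*0 = i := by omega
            rw [e1]; linarith
          exact iff_of_true hlt (Or.inl ⟨by omega, by omega⟩)
        · have htq : q ≤ (t:ℝ)*q := by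
            have h1 : (1:ℝ) ≤ (t:ℝ) := by exact_mod_cast htpos
            nlinarith
          have hlt : y (i + 2*t) < α := by
            rw [hval]
            simp only [hqdef] at *
            linarith
          exact iff_of_true hlt (Or.inl ⟨by omega, by omega⟩)
      · -- m+1 = i + 2t + 1, t ≤ k
        have htk : t ≤ k := by omega
        have e0 : m + 1 = i + 2*t + 1 := by omega
        rw [e0]
        have hval := cb t htk (by omega)
        have hge : ¬ (y (i + 2*t + 1) < α) := by
          push_neg
          rw [hval, ct t htk]
          have h1 : (t:ℝ)*q ≤ (k:ℝ)*q := by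
            have : (t:ℝ) ≤ (k:ℝ) := by exact_mod_cast htk
            nlinarith
          linarith
        exact iff_of_false hge (by omega)
    · push_neg at hcen
      rcases Nat.even_or_odd (m+1-(i+2*k)) with ⟨s, hs⟩ | ⟨s, hs⟩
      · -- m+1 = i+2k+2s, s ≥ 1
        obtain ⟨s', rfl⟩ : ∃ s'', s = s'' + 1 := ⟨s-1, by omega⟩
        have e0 : m + 1 = i+2*k+2*s'+2 := by omega
        rw [e0]
        have hval := (suf s').2 (by omega)
        have hge : ¬ (y (i+2*k+2*s'+2) < α) := by
          push_neg
          rw [hval]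
          rcases Nat.eq_zero_or_pos s' with rfl | hspos
          · push_cast
            linarith [y0 (i+2*k)]
          · have hvo := (suf s').1 (by omega)
            have hmem := memB (i+2*k+2*s'+1) (by omega) (by rintro ⟨s'', hs'', he⟩; omega)
            rw [hvo] at hmem
            linarith
        exact iff_of_false hge (by omega)
      · -- m+1 = i+2k+2s+1, s ≥ 1
        have hs1 : 1 ≤ s := by omega
        have e0 : m + 1 = i+2*k+2*s+1 := by omega
        rw [e0]
        have hval := (suf s).1 (by omega)
        have hyMq : y (i+2*k) < q := by
          have hev := (suf 0).2 (by omega)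
          have h1 := y1 (i+2*k+2*0+2)
          rw [hev] at h1
          push_cast at h1
          simp only [hqdef]
          linarith
        have hlt : y (i+2*k+2*s+1) < α := by
          rw [hval]
          have h1 : q ≤ (s:ℝ)*q := by
            have : (1:ℝ) ≤ (s:ℝ) := by exact_mod_cast hs1
            nlinarith
          linarith
        exact iff_of_true hlt (Or.inr ⟨by omega, by omega⟩)

end Key

section Sol

lemma uv_diff (α β β' : ℝ) (hα0 : 0 < α) (hα1 : α < 1) (m : ℕ) :
    ((decide (Int.fract ((m:ℝ)*α - β) < α)).toNat : ℤ)
      - ((decide (Int.fract ((m:ℝ)*α - β') < α)).toNat : ℤ)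
    = (if Int.fract (((((m+1:ℕ)):ℝ) - 1)*α - β) < Int.fract (β' - β) then (1:ℤ) else 0)
      - (if Int.fract (((m:ℝ) - 1)*α - β) < Int.fract (β' - β) then (1:ℤ) else 0) := by
  have ecast : ((((m+1:ℕ)):ℝ) - 1) = (m:ℝ) := by push_cast; ring
  rw [ecast]
  set η := Int.fract (β' - β) with hηdef
  have hη0 : 0 ≤ η := Int.fract_nonneg _
  have hη1 : η < 1 := Int.fract_lt_one _
  rw [decide_fract_toNat _ α hα0.le hα1, decide_fract_toNat _ α hα0.le hα1]
  have key : ∀ X : ℝ, (⌊X⌋ : ℤ) - ⌊X - (β' - β)⌋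
      = (if Int.fract X < η then (1:ℤ) else 0) + ⌊β' - β⌋ := by
    intro X
    have h1 : X - (β' - β) = (X - η) - (⌊β' - β⌋ : ℤ) := by
      simp only [hηdef, Int.fract]; ring
    rw [h1, Int.floor_sub_intCast]
    have h2 := floor_sub_indicator X η hη0 hη1
    omega
  have e1 : (m:ℝ)*α - β' = ((m:ℝ)*α - β) - (β' - β) := by ring
  have e2 : (m:ℝ)*α - β' - α = ((m:ℝ)*α - β - α) - (β' - β) := by ring
  rw [e2, e1]
  have k1 := key ((m:ℝ)*α - β)
  have k2 := key ((m:ℝ)*α - β - α)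
  have e3 : Int.fract (((m:ℝ)-1)*α - β) = Int.fract ((m:ℝ)*α - β - α) := by
    congr 1; ring
  rw [e3]
  omega

lemma gen_iff_dia (n i k j : ℕ) (hk : 1 ≤ k) (hn : n = i + 2*k + j)
    (α β β' : ℝ) (hα0 : 0 < α) (hα1 : α < 1) (hβ0 : 0 ≤ β) (hβ1 : β < 1)
    (hβ'0 : 0 ≤ β') (hβ'1 : β' < 1) :
    Generates (rotWord α β (Int.fract (β+α)) n) (rotWord α β' (Int.fract (β'+α)) n)
        (pat0 i 1 k j)
    ↔ ∀ p, p ≤ n → ((∃ t, t ≤ k ∧ p = i + 2*t) ↔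
        Int.fract (((p:ℝ)-1)*α - β) < Int.fract (β' - β)) := by
  set η := Int.fract (β' - β) with hηdef
  set R : ℕ → ℤ := fun p => ((pat0 i 1 k j).getD p false).toNat with hR
  set I : ℕ → ℤ := fun p => if Int.fract (((p:ℝ)-1)*α - β) < η then 1 else 0 with hI
  have hlen : (rotWord α β (Int.fract (β+α)) n).length = n := rot_length _ _ _ _
  have hustep : ∀ m, m < n →
      ((((rotWord α β (Int.fract (β+α)) n).getD m false).toNat : ℤ)
        - (((rotWord α β' (Int.fract (β'+α)) n).getD m false).toNat : ℤ))
      = I (m+1) - I m := by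
    intro m hm
    rw [rot_letter α β hα0 hα1 hβ0 hβ1 n m hm, rot_letter α β' hα0 hα1 hβ'0 hβ'1 n m hm]
    exact uv_diff α β β' hα0 hα1 m
  have hRtrue : ∀ p, (i ≤ p ∧ p ≤ i + 2*k ∧ (p - i) % 2 = 0) → R p = 1 := by
    intro p hp
    simp only [hR]
    rw [(pat_getD i k j p).2 hp]
    rfl
  have hRfalse : ∀ p, ¬(i ≤ p ∧ p ≤ i + 2*k ∧ (p - i) % 2 = 0) → R p = 0 := by
    intro p hp
    simp only [hR]
    cases hb : (pat0 i 1 k j).getD p false with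
    | false => simp
    | true => exact absurd ((pat_getD i k j p).1 hb) hp
  have hIcases : ∀ p, I p = 0 ∨ I p = 1 := by
    intro p; simp only [hI]; split <;> simp
  have harith : ∀ p, (∃ t, t ≤ k ∧ p = i + 2*t) ↔ (i ≤ p ∧ p ≤ i + 2*k ∧ (p - i) % 2 = 0) := by
    intro p
    constructor
    · rintro ⟨t, ht, rfl⟩; omega
    · rintro ⟨h1, h2, h3⟩; exact ⟨(p - i)/2, by omega, by omega⟩
  constructor
  · intro hgen
    have tele : ∀ p, p ≤ n → R p - I p = R 0 - I 0 := by
      intro p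
      induction p with
      | zero => intro _; rfl
      | succ p ih =>
          intro hp
          have hstep := hgen p (by rw [hlen]; omega)
          have hd := hustep p (by omega)
          have hRp : R (p+1) - I (p+1) = R p - I p := by
            simp only [hR] at hstep ⊢
            omega
          rw [hRp]
          exact ih (by omega)
    have hri : R i = 1 := hRtrue i ⟨le_rfl, by omega, by omega⟩
    have hri1 : R (i+1) = 0 := hRfalse (i+1) (by omega)
    have hIi := tele i (by omega)
    have hIi1 := tele (i+1) (by omega)
    have hc : R 0 - I 0 = 0 := by
      rcases hIcases i with h | h <;> rcases hIcases (i+1) with h' | h' <;> omega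
    intro p hp
    have htp := tele p hp
    rw [harith p]
    constructor
    · intro h
      have h1 : R p = 1 := hRtrue p h
      have h2 : I p = 1 := by omega
      simp only [hI] at h2
      by_contra hc2
      rw [if_neg hc2] at h2
      norm_num at h2
    · intro h
      by_contra hc2
      have h1 : R p = 0 := hRfalse p hc2
      have h2 : I p = 0 := by omega
      simp only [hI, if_pos h] at h2
      norm_num at h2
  · intro hdia
    have hRI : ∀ p, p ≤ n → R p = I p := by
      intro p hp
      have h1 := (hdia p hp)
      rw [harith p] at h1
      by_cases h : (i ≤ p ∧ p ≤ i + 2*k ∧ (p - i) % 2 = 0)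
      · rw [hRtrue p h]
        simp only [hI, if_pos (h1.1 h)]
      · rw [hRfalse p h]
        have : ¬ (Int.fract (((p:ℝ)-1)*α - β) < η) := fun hc => h (h1.2 hc)
        simp only [hI, if_neg this]
    intro m hm
    rw [hlen] at hm
    have h1 := hustep m hm
    have h2 := hRI (m+1) (by omega)
    have h3 := hRI m (by omega)
    simp only [hR] at h2 h3 ⊢
    omega

end Sol

section Exist

private lemma fcomp (x V : ℝ) (z : ℤ) (hx : x = V + z) (h0 : 0 ≤ V) (h1 : V < 1) :
    Int.fract x = V := by
  rw [hx, Int.fract_add_intCast]; exact Int.fract_eq_self.2 ⟨h0, h1⟩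

lemma exist_dia (n i k j : ℕ) (hk : 1 ≤ k) (hn : n = i + 2*k + j) :
    ∃ α β β' : ℝ, (0 < α ∧ 2*α < 1) ∧ (0 ≤ β ∧ β < 1) ∧ (0 ≤ β' ∧ β' < 1) ∧
      ∀ p, p ≤ n → ((∃ t, t ≤ k ∧ p = i + 2*t) ↔
        Int.fract (((p:ℝ)-1)*α - β) < Int.fract (β' - β)) := by
  set q₀ : ℝ := 1/(2*(n:ℝ)+4) with hq₀def
  have hD : (0:ℝ) < 2*(n:ℝ)+4 := by positivity
  have hq₀0 : 0 < q₀ := by rw [hq₀def]; positivity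
  set α₀ : ℝ := (1 - q₀)/2 with hα₀def
  have hq₀4 : q₀ ≤ 1/4 := by
    rw [hq₀def]
    rw [div_le_div_iff₀ hD (by norm_num : (0:ℝ) < 4)]
    have : (0:ℝ) ≤ (n:ℝ) := Nat.cast_nonneg n
    linarith
  have hα₀0 : 0 < α₀ := by rw [hα₀def]; linarith
  have hα₀2 : 2*α₀ < 1 := by rw [hα₀def]; linarith
  have hα₀1 : α₀ < 1 := by linarith
  have hbound_le : ∀ c : ℕ, c ≤ n+1 → (c:ℝ)*q₀ ≤ α₀ := by
    intro c hc
    have hcR : (c:ℝ) ≤ (n:ℝ)+1 := by exact_mod_cast hc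
    rw [hq₀def, hα₀def, mul_one_div, div_le_div_iff₀ hD (by norm_num : (0:ℝ) < 2)]
    have hfs : (1 - 1/(2*(n:ℝ)+4))*(2*(n:ℝ)+4) = 2*(n:ℝ)+3 := by
      field_simp; ring
    rw [hfs]
    linarith
  have hbound_lt : ∀ c : ℕ, c ≤ n → (c:ℝ)*q₀ < α₀ := by
    intro c hc
    have hcR : (c:ℝ) ≤ (n:ℝ) := by exact_mod_cast hc
    rw [hq₀def, hα₀def, mul_one_div, div_lt_div_iff₀ hD (by norm_num : (0:ℝ) < 2)]
    have hfs : (1 - 1/(2*(n:ℝ)+4))*(2*(n:ℝ)+4) = 2*(n:ℝ)+3 := by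
      field_simp; ring
    rw [hfs]
    linarith
  set η₀ : ℝ := ((k:ℝ)+1)*q₀ with hη₀def
  have hη₀0 : 0 < η₀ := by
    rw [hη₀def]; positivity
  have hη₀1 : η₀ < 1 := by
    have := hbound_le (k+1) (by omega)
    push_cast at this
    rw [hη₀def]
    linarith
  set Z : ℝ := ((i:ℝ)-1)*α₀ - (k:ℝ)*q₀ with hZdef
  set β₀ : ℝ := Int.fract Z with hβ₀def
  set β'₀ : ℝ := Int.fract (β₀ + η₀) with hβ'₀def
  have hβ₀0 : 0 ≤ β₀ := Int.fract_nonneg _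
  have hβ₀1 : β₀ < 1 := Int.fract_lt_one _
  have hβ'₀0 : 0 ≤ β'₀ := Int.fract_nonneg _
  have hβ'₀1 : β'₀ < 1 := Int.fract_lt_one _
  have hηeq : Int.fract (β'₀ - β₀) = η₀ := by
    have h1 : β'₀ - β₀ = η₀ - (⌊β₀ + η₀⌋ : ℤ) := by
      rw [hβ'₀def, Int.fract]; ring
    rw [h1, Int.fract_sub_intCast]
    exact Int.fract_eq_self.2 ⟨le_of_lt hη₀0, hη₀1⟩
  have hyrep : ∀ p : ℕ, Int.fract (((p:ℝ)-1)*α₀ - β₀)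
      = Int.fract (((p:ℝ) - (i:ℝ))*α₀ + (k:ℝ)*q₀) := by
    intro p
    have h1 : ((p:ℝ)-1)*α₀ - β₀ = (((p:ℝ) - i)*α₀ + k*q₀) + (⌊Z⌋ : ℤ) := by
      rw [hβ₀def, Int.fract, hZdef]; ring
    rw [h1, Int.fract_add_intCast]
  refine ⟨α₀, β₀, β'₀, ⟨hα₀0, hα₀2⟩, ⟨hβ₀0, hβ₀1⟩, ⟨hβ'₀0, hβ'₀1⟩, ?_⟩
  intro p hp
  rw [hηeq, hyrep p]
  rcases lt_or_ge p i with hpi | hpi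
  · -- p < i : both sides false
    refine iff_of_false (by rintro ⟨t, ht, rfl⟩; omega) ?_
    push_neg
    rcases Nat.even_or_odd (i - p) with ⟨d, hd⟩ | ⟨d, hd⟩
    · -- i = p + 2d, d ≥ 1
      have hiR : (i:ℝ) = (p:ℝ) + 2*(d:ℝ) := by
        have : i = p + 2*d := by omega
        rw [this]; push_cast; ring
      have hval : Int.fract (((p:ℝ) - i)*α₀ + (k:ℝ)*q₀) = ((k:ℝ)+(d:ℝ))*q₀ := by
        apply fcomp _ _ (-(d:ℤ))
        · rw [hiR, hα₀def]; push_cast; ring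
        · positivity
        · have := hbound_lt (k+d) (by omega)
          push_cast at this
          linarith
      rw [hval, hη₀def]
      have hd1 : (1:ℝ) ≤ (d:ℝ) := by exact_mod_cast (by omega : 1 ≤ d)
      exact mul_le_mul_of_nonneg_right (by linarith) hq₀0.le
    · -- i = p + 2d + 1
      have hiR : (i:ℝ) = (p:ℝ) + 2*(d:ℝ) + 1 := by
        have : i = p + 2*d + 1 := by omega
        rw [this]; push_cast; ring
      have hval : Int.fract (((p:ℝ) - i)*α₀ + (k:ℝ)*q₀)
          = 1 - α₀ + ((k:ℝ)+(d:ℝ))*q₀ := by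
        apply fcomp _ _ (-(d:ℤ)-1)
        · rw [hiR, hα₀def]; push_cast; ring
        · have h1 : 0 ≤ ((k:ℝ)+(d:ℝ))*q₀ := by positivity
          linarith
        · have := hbound_lt (k+d) (by omega)
          push_cast at this
          linarith
      rw [hval, hη₀def]
      have hdq : 0 ≤ (d:ℝ)*q₀ := by positivity
      have h1a : q₀ ≤ 1 - α₀ := by rw [hα₀def]; linarith
      linarith
  · rcases Nat.even_or_odd (p - i) with ⟨t, ht⟩ | ⟨t, ht⟩
    · -- p = i + 2t
      have hpt : p = i + 2*t := by omega
      rcases le_or_gt t k with htk | htk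
      · -- in the A set : both sides true
        have hpR : (p:ℝ) = (i:ℝ) + 2*(t:ℝ) := by
          rw [hpt]; push_cast; ring
        have htR : (t:ℝ) ≤ (k:ℝ) := by exact_mod_cast htk
        have hval : Int.fract (((p:ℝ) - i)*α₀ + (k:ℝ)*q₀) = ((k:ℝ)-(t:ℝ))*q₀ := by
          apply fcomp _ _ (t:ℤ)
          · rw [hpR, hα₀def]; push_cast; ring
          · exact mul_nonneg (by linarith) hq₀0.le
          · have h1 := hbound_lt k (by omega)
            have h2 : ((k:ℝ)-(t:ℝ))*q₀ ≤ (k:ℝ)*q₀ :=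
              mul_le_mul_of_nonneg_right (by linarith [(Nat.cast_nonneg t : (0:ℝ) ≤ (t:ℝ))]) hq₀0.le
            linarith
        rw [hval, hη₀def]
        refine iff_of_true ⟨t, htk, hpt⟩ ?_
        exact mul_lt_mul_of_pos_right (by linarith [(Nat.cast_nonneg t : (0:ℝ) ≤ (t:ℝ))]) hq₀0
      · -- beyond the A set
        obtain ⟨s, rfl⟩ : ∃ s, t = k + s := ⟨t - k, by omega⟩
        have hs1 : 1 ≤ s := by omega
        have hpR : (p:ℝ) = (i:ℝ) + 2*(k:ℝ) + 2*(s:ℝ) := by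
          rw [hpt]; push_cast; ring
        have hsn : s ≤ n := by omega
        have hval : Int.fract (((p:ℝ) - i)*α₀ + (k:ℝ)*q₀) = 1 - (s:ℝ)*q₀ := by
          apply fcomp _ _ ((k:ℤ)+(s:ℤ)-1)
          · rw [hpR, hα₀def]; push_cast; ring
          · have := hbound_lt s hsn
            linarith
          · have hs1R : (1:ℝ) ≤ (s:ℝ) := by exact_mod_cast hs1
            have hsp : 0 < (s:ℝ)*q₀ := mul_pos (by linarith) hq₀0
            linarith
        rw [hval, hη₀def]
        refine iff_of_false (by rintro ⟨t', ht', he⟩; omega) ?_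
        push_neg
        have := hbound_le (k+1+s) (by omega)
        push_cast at this
        linarith
    · -- p = i + 2t + 1 : both sides false
      have hpt : p = i + 2*t + 1 := by omega
      refine iff_of_false (by rintro ⟨t', ht', he⟩; omega) ?_
      push_neg
      rcases le_or_gt t k with htk | htk
      · have hpR : (p:ℝ) = (i:ℝ) + 2*(t:ℝ) + 1 := by
          rw [hpt]; push_cast; ring
        have htR : (t:ℝ) ≤ (k:ℝ) := by exact_mod_cast htk
        have hval : Int.fract (((p:ℝ) - i)*α₀ + (k:ℝ)*q₀)
            = α₀ + ((k:ℝ)-(t:ℝ))*q₀ := by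
          apply fcomp _ _ (t:ℤ)
          · rw [hpR, hα₀def]; push_cast; ring
          · have h1 : 0 ≤ ((k:ℝ)-(t:ℝ))*q₀ := mul_nonneg (by linarith) hq₀0.le
            linarith
          · have h1 := hbound_lt k (by omega)
            have h2 : ((k:ℝ)-(t:ℝ))*q₀ ≤ (k:ℝ)*q₀ :=
              mul_le_mul_of_nonneg_right (by linarith [(Nat.cast_nonneg t : (0:ℝ) ≤ (t:ℝ))]) hq₀0.le
            linarith
        rw [hval, hη₀def]
        have := hbound_le (t+1) (by omega)
        push_cast at this
        linarith
      · obtain ⟨s, rfl⟩ : ∃ s, t = k + s := ⟨t - k, by omega⟩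
        have hs1 : 1 ≤ s := by omega
        have hpR : (p:ℝ) = (i:ℝ) + 2*(k:ℝ) + 2*(s:ℝ) + 1 := by
          rw [hpt]; push_cast; ring
        have hval : Int.fract (((p:ℝ) - i)*α₀ + (k:ℝ)*q₀) = α₀ - (s:ℝ)*q₀ := by
          apply fcomp _ _ ((k:ℤ)+(s:ℤ))
          · rw [hpR, hα₀def]; push_cast; ring
          · have := hbound_le s (by omega)
            linarith
          · have h1 : 0 ≤ (s:ℝ)*q₀ := by positivity
            linarith
        rw [hval, hη₀def]
        have := hbound_le (k+1+s) (by omega)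
        push_cast at this
        linarith
end Exist

/-- A word `w = 0^i (1 0)^k 1 0^j` of length `n+1` with `i, j ≥ 0`, `k ≥ 1` is
generated by exactly one pair of Sturmian words of a common slope in `(0,1/2)`. -/
theorem count_pairs_l_eq_one (n i j k : ℕ) (hk : 1 ≤ k)
    (hlen : (pat0 i 1 k j).length = n + 1) :
    (GenPairs n (pat0 i 1 k j)).ncard = 1 := by
  have hlen' := pat_len i k j
  have hn : n = i + 2*k + j := by omega
  obtain ⟨α₀, β₀, β'₀, ⟨hα₀0, hα₀2⟩, ⟨hβ₀0, hβ₀1⟩, ⟨hβ'₀0, hβ'₀1⟩, hdia₀⟩ :=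
    exist_dia n i k j hk hn
  have hα₀1 : α₀ < 1 := by linarith
  set U := rotWord α₀ β₀ (Int.fract (β₀+α₀)) n with hU
  set V := rotWord α₀ β'₀ (Int.fract (β'₀+α₀)) n with hV
  have hgen₀ : Generates U V (pat0 i 1 k j) :=
    (gen_iff_dia n i k j hk hn α₀ β₀ β'₀ hα₀0 hα₀1 hβ₀0 hβ₀1 hβ'₀0 hβ'₀1).2 hdia₀
  have hmem : (U, V) ∈ GenPairs n (pat0 i 1 k j) :=
    ⟨α₀, ⟨hα₀0, by norm_num; linarith⟩, ⟨β₀, ⟨hβ₀0, hβ₀1⟩, rfl⟩,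
      ⟨β'₀, ⟨hβ'₀0, hβ'₀1⟩, rfl⟩, hgen₀⟩
  have hlet₀ := key_letters n i k j hk hn α₀ β₀ (Int.fract (β'₀ - β₀)) hα₀0 hα₀2
    (Int.fract_lt_one _) hdia₀
  have huniq : ∀ w ∈ GenPairs n (pat0 i 1 k j), w = (U, V) := by
    rintro ⟨u, v⟩ ⟨α, ⟨hα0, hα12⟩, ⟨β, ⟨hβ0, hβ1⟩, hu⟩, ⟨β', ⟨hβ'0, hβ'1⟩, hv⟩, hgen⟩
    simp only at hu hv hgen
    subst hu
    subst hv
    have hα2 : 2*α < 1 := by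
      have : α < 1/2 := hα12
      linarith
    have hα1 : α < 1 := by linarith
    have hdia := (gen_iff_dia n i k j hk hn α β β' hα0 hα1 hβ0 hβ1 hβ'0 hβ'1).1 hgen
    have hlet := key_letters n i k j hk hn α β (Int.fract (β' - β)) hα0 hα2
      (Int.fract_lt_one _) hdia
    have hueq : rotWord α β (Int.fract (β+α)) n = U := by
      apply List.ext_getElem (by rw [rot_length, rot_length])
      intro m h1 h2
      have hmn : m < n := by rwa [rot_length] at h1
      rw [← List.getD_eq_getElem _ false h1, ← List.getD_eq_getElem _ false h2]
      rw [rot_letter α β hα0 hα1 hβ0 hβ1 n m hmn, hU,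
        rot_letter α₀ β₀ hα₀0 hα₀1 hβ₀0 hβ₀1 n m hmn]
      exact decide_eq_decide.mpr ((hlet m hmn).trans (hlet₀ m hmn).symm)
    have hveq : rotWord α β' (Int.fract (β'+α)) n = V := by
      apply List.ext_getElem (by rw [rot_length, rot_length])
      intro m h1 h2
      have hmn : m < n := by rwa [rot_length] at h1
      rw [← List.getD_eq_getElem _ false h1, ← List.getD_eq_getElem _ false h2]
      have g1 := hgen m (by rw [rot_length]; exact hmn)
      have g2 := hgen₀ m (by rw [rot_length]; exact hmn)
      have huu : ((rotWord α β (Int.fract (β+α)) n).getD m false).toNat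
          = ((U.getD m false).toNat : ℤ) := by rw [hueq]
      apply bool_toNat_inj
      omega
    exact Prod.ext hueq hveq
  have hset : GenPairs n (pat0 i 1 k j) = {(U, V)} :=
    Set.eq_singleton_iff_unique_mem.2 ⟨hmem, huniq⟩
  rw [hset, Set.ncard_singleton]
end

section
/- For all natural numbers n and l with 1 ≤ l and l + 1 ≤ n, the identity ∑_{i=0}^{n−(l+1)} ⌊(n−i)/(l+1)⌋ = (1/2)·⌊n/(l+1)⌋·(n − l + 1 + (n mod (l+1))) holds. -/
lemma floor_sum_aux (m : ℕ) (hm : 0 < m) (n : ℕ) :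
    2 * (∑ j ∈ Finset.range (n + 1), j / m) + m * (n / m) =
      m * (n / m) * (n / m) + 2 * (n / m) * (n % m + 1) := by
  induction n with
  | zero => simp [Nat.div_eq_of_lt hm]
  | succ n ih =>
    have hmod : (n % m + 1) % m = (n + 1) % m := by
      conv_rhs => rw [show n + 1 = n % m + 1 + m * (n / m) by
        have := Nat.mod_add_div n m; omega]
      rw [Nat.add_mul_mod_self_left]
    have hlt : n % m < m := Nat.mod_lt _ hm
    rw [Finset.sum_range_succ, Nat.succ_div]
    by_cases hd : m ∣ n + 1
    · simp only [hd, if_true]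
      have h1 : (n + 1) % m = 0 := Nat.mod_eq_zero_of_dvd hd
      have h2 : n % m + 1 = m := by
        rw [← hmod] at h1
        rcases Nat.lt_or_ge (n % m + 1) m with h | h
        · rw [Nat.mod_eq_of_lt h] at h1; omega
        · omega
      rw [h1]
      rw [h2] at ih
      generalize hS : (∑ j ∈ Finset.range (n + 1), j / m) = S at *
      generalize hq : n / m = q at *
      zify at ih ⊢
      linear_combination ih
    · simp only [hd, if_false]
      have h1 : n % m + 1 ≠ m := by
        intro h
        refine hd ⟨n / m + 1, ?_⟩
        rw [Nat.mul_add, Nat.mul_one]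
        have := Nat.mod_add_div n m; omega
      have h2 : (n + 1) % m = n % m + 1 := by
        rw [← hmod, Nat.mod_eq_of_lt (by omega)]
      rw [h2]
      generalize hS : (∑ j ∈ Finset.range (n + 1), j / m) = S at *
      generalize hq : n / m = q at *
      generalize hr : n % m = r at *
      zify at ih ⊢
      linear_combination ih

/-- For `1 ≤ l` and `l + 1 ≤ n`,
`∑_{i=0}^{n-(l+1)} ⌊(n-i)/(l+1)⌋ = (1/2) ⌊n/(l+1)⌋ (n - l + 1 + (n mod (l+1)))`. -/
theorem floor_sum_identity (n l : ℕ) (hl : 1 ≤ l) (hn : l + 1 ≤ n) :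
    ((∑ i ∈ Finset.range (n - (l + 1) + 1), (n - i) / (l + 1) : ℕ) : ℚ) =
      (1 / 2 : ℚ) * ((n / (l + 1) : ℕ) : ℚ)
        * ((n : ℚ) - (l : ℚ) + 1 + ((n % (l + 1) : ℕ) : ℚ)) := by
  have hm : 0 < l + 1 := Nat.succ_pos l
  have h2 : ∑ i ∈ Finset.range (n - (l + 1) + 1), (n - i) / (l + 1)
      = ∑ i ∈ Finset.range (n + 1), (n - i) / (l + 1) := by
    refine Finset.sum_subset (Finset.range_subset_range.mpr (by omega)) ?_
    intro x hx hnx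
    simp only [Finset.mem_range] at hx hnx
    exact Nat.div_eq_of_lt (by omega)
  have h3 : ∑ i ∈ Finset.range (n + 1), (n - i) / (l + 1)
      = ∑ j ∈ Finset.range (n + 1), j / (l + 1) := by
    have := Finset.sum_range_reflect (fun j => j / (l + 1)) (n + 1)
    simpa using this
  rw [h2, h3]
  have hq : 1 ≤ n / (l + 1) := Nat.one_le_div_iff hm |>.mpr hn
  have A := floor_sum_aux (l + 1) hm n
  have hdm := Nat.mod_add_div n (l + 1)
  have key : 2 * (∑ j ∈ Finset.range (n + 1), j / (l + 1))
      = (n / (l + 1)) * (n - l + 1 + n % (l + 1)) := by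
    generalize hS : (∑ j ∈ Finset.range (n + 1), j / (l + 1)) = S at *
    generalize hQ : n / (l + 1) = q at *
    generalize hR : n % (l + 1) = r at *
    have hln : l ≤ n := by omega
    zify [hln] at A hdm ⊢
    linear_combination A + (q : ℤ) * hdm
  have hln : l ≤ n := by omega
  have key' : ((2 * (∑ j ∈ Finset.range (n + 1), j / (l + 1)) : ℕ) : ℚ)
      = ((n / (l + 1) : ℕ) : ℚ) * ((n : ℚ) - l + 1 + (n % (l + 1) : ℕ)) := by
    rw [key]
    push_cast [hln]
    ring
  push_cast at key' ⊢
  linear_combination key' / 2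
end

section
/- For every n ≥ 1, every slope α ∈ (0,1/2) and all u, v ∈ St(n,α), there exists a rotation word r ∈ R(n+1) that is generated by the ordered pair (u,v). -/
open scoped Classical

/- ### Auxiliary lemmas -/

/-- The indicator of `{x} < c` as a difference of floors, for `c ∈ [0,1)`. -/
lemma aux_ind_eq (x c : ℝ) (h0 : 0 ≤ c) (h1 : c < 1) :
    (if Int.fract x < c then (1:ℤ) else 0) = ⌊x⌋ - ⌊x - c⌋ := by
  have hx : Int.fract x = x - ⌊x⌋ := rfl
  have hx0 := Int.fract_nonneg x
  have hx1 := Int.fract_lt_one x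
  rw [hx] at hx0 hx1
  split_ifs with h
  · rw [hx] at h
    have : ⌊x - c⌋ = ⌊x⌋ - 1 := by
      rw [Int.floor_eq_iff]
      push_cast
      constructor
      · linarith
      · linarith
    omega
  · push_neg at h
    rw [hx] at h
    have : ⌊x - c⌋ = ⌊x⌋ := by
      rw [Int.floor_eq_iff]
      push_cast
      constructor
      · linarith
      · linarith
    omega

lemma aux_fract_small (t : ℝ) (h1 : -1 ≤ t) (h2 : t < 1) :
    Int.fract t = if t < 0 then t + 1 else t := by
  split_ifs with h
  · have : Int.fract (t + 1) = t + 1 := Int.fract_eq_self.2 ⟨by linarith, by linarith⟩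
    rwa [Int.fract_add_one] at this
  · exact Int.fract_eq_self.2 ⟨by linarith, h2⟩

lemma aux_fract_sub_fract (s t : ℝ) :
    Int.fract (Int.fract s - Int.fract t) = Int.fract (s - t) := by
  have h : Int.fract s - Int.fract t = (s - t) + ((⌊t⌋ - ⌊s⌋ : ℤ) : ℝ) := by
    unfold Int.fract; push_cast; ring
  rw [h, Int.fract_add_intCast]

lemma aux_fract_sub_fract' (s t : ℝ) :
    Int.fract (s - Int.fract t) = Int.fract (s - t) := by
  have h : s - Int.fract t = (s - t) + ((⌊t⌋ : ℤ) : ℝ) := by unfold Int.fract; ring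
  rw [h, Int.fract_add_intCast]

lemma aux_fract_fract_sub (s t : ℝ) :
    Int.fract (Int.fract s - t) = Int.fract (s - t) := by
  have h : Int.fract s - t = (s - t) + ((-⌊s⌋ : ℤ) : ℝ) := by unfold Int.fract; push_cast; ring
  rw [h, Int.fract_add_intCast]

/-- The central arithmetic identity. -/
lemma aux_key (α β γ a : ℝ) (hα0 : 0 ≤ α) (hα1 : α < 1) :
    (if Int.fract (a - β) < Int.fract (γ - β) then (1:ℤ) else 0) =
    (if Int.fract (a - β - α) < Int.fract (γ - β) then (1:ℤ) else 0) +
    (if Int.fract (a - β) < α then (1:ℤ) else 0) -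
    (if Int.fract (a - γ) < α then (1:ℤ) else 0) := by
  have hc0 := Int.fract_nonneg (γ - β)
  have hc1 := Int.fract_lt_one (γ - β)
  rw [aux_ind_eq _ _ hc0 hc1, aux_ind_eq _ _ hc0 hc1, aux_ind_eq _ _ hα0 hα1,
    aux_ind_eq _ _ hα0 hα1]
  have e1 : a - β - Int.fract (γ - β) = (a - γ) + ((⌊γ - β⌋ : ℤ) : ℝ) := by
    unfold Int.fract; push_cast; ring
  have e2 : a - β - α - Int.fract (γ - β) = (a - γ - α) + ((⌊γ - β⌋ : ℤ) : ℝ) := by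
    unfold Int.fract; push_cast; ring
  rw [e1, e2, Int.floor_add_intCast, Int.floor_add_intCast]
  ring

/-- Characterization of `inCirc` through fractional parts, on `[0,1)`. -/
lemma aux_inCirc_iff (β γ x : ℝ) (hβ0 : 0 ≤ β) (hβ1 : β < 1) (hγ0 : 0 ≤ γ) (hγ1 : γ < 1)
    (hx0 : 0 ≤ x) (hx1 : x < 1) :
    inCirc β γ x ↔ Int.fract (x - β) < Int.fract (γ - β) := by
  unfold inCirc
  rw [aux_fract_small (x - β) (by linarith) (by linarith),
      aux_fract_small (γ - β) (by linarith) (by linarith)]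
  split_ifs <;>
    constructor <;> intro h <;>
      first
        | linarith
        | exact h.elim
        | (constructor <;> linarith)
        | (rcases h with h | h <;> linarith)
        | (left; linarith)
        | (right; linarith)
        | (exfalso; rcases h with h | h <;> linarith)
        | (exfalso; linarith [h.1, h.2])

lemma aux_ite_inCirc (β γ x : ℝ) (hβ0 : 0 ≤ β) (hβ1 : β < 1) (hγ0 : 0 ≤ γ) (hγ1 : γ < 1)
    (hx0 : 0 ≤ x) (hx1 : x < 1) :
    (if inCirc β γ x then (1:ℤ) else 0)
      = if Int.fract (x - β) < Int.fract (γ - β) then (1:ℤ) else 0 := by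
  simp only [aux_inCirc_iff β γ x hβ0 hβ1 hγ0 hγ1 hx0 hx1]

lemma aux_flat_eq (l : List ℕ) :
    (l.flatMap fun a => [((a:ℕ):ℝ)]) = l.map (fun a : ℕ => (a:ℝ)) := by
  induction l with
  | nil => rfl
  | cons a l ih => rw [List.flatMap_cons, List.map_cons, ih]; rfl

lemma aux_rotWord_eq (α β γ : ℝ) (m : ℕ) :
    rotWord α β γ m
      = (List.range m).map
          (fun k : ℕ => if inCirc β γ (Int.fract ((k:ℝ) * α)) then true else false) := by
  unfold rotWord
  show List.map _ ((List.range m).flatMap fun a => [((a:ℕ):ℝ)]) = _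
  rw [aux_flat_eq, List.map_map]
  rfl

lemma aux_rotWord_length (α β γ : ℝ) (m : ℕ) : (rotWord α β γ m).length = m := by
  rw [aux_rotWord_eq, List.length_map, List.length_range]

lemma aux_rotWord_getD (α β γ : ℝ) (m k : ℕ) (h : k < m) :
    (rotWord α β γ m).getD k false
      = (if inCirc β γ (Int.fract ((k:ℝ) * α)) then true else false) := by
  rw [aux_rotWord_eq, List.getD_eq_getElem?_getD, List.getElem?_map, List.getElem?_range h]
  rfl

lemma aux_toNat_ite (P : Prop) [Decidable P] :
    (((if P then true else false).toNat : ℤ)) = if P then 1 else 0 := by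
  split_ifs <;> simp

/-- For every `n ≥ 1`, every slope `α ∈ (0,1/2)` and all `u, v ∈ St(n,α)`,
there exists a rotation word `r ∈ R(n+1)` generated by the pair `(u,v)`. -/
theorem pair_generates_rotation_word (n : ℕ) (hn : 1 ≤ n) (α : ℝ)
    (hα : α ∈ Set.Ioo (0:ℝ) (1/2 : ℝ)) (u v : List Bool)
    (hu : u ∈ St n α) (hv : v ∈ St n α) :
    ∃ r ∈ RotWords (n + 1), Generates u v r := by
  obtain ⟨β, hβ, huw⟩ := hu
  obtain ⟨γ, hγ, hvw⟩ := hv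
  obtain ⟨hβ0, hβ1⟩ := hβ
  obtain ⟨hγ0, hγ1⟩ := hγ
  have hα0 : (0:ℝ) ≤ α := hα.1.le
  have hα1 : α < 1 := by linarith [hα.2]
  refine ⟨rotWord α (Int.fract (β + α)) (Int.fract (γ + α)) (n+1),
    ⟨α, ⟨hα0, hα1⟩, _, ⟨Int.fract_nonneg _, Int.fract_lt_one _⟩,
      _, ⟨Int.fract_nonneg _, Int.fract_lt_one _⟩, rfl⟩, ?_⟩
  intro k hk
  have hklen : k < n := by rwa [huw, aux_rotWord_length] at hk
  rw [huw, hvw,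
    aux_rotWord_getD _ _ _ _ _ (by omega : k + 1 < n + 1),
    aux_rotWord_getD _ _ _ _ _ (by omega : k < n + 1),
    aux_rotWord_getD _ _ _ _ _ hklen, aux_rotWord_getD _ _ _ _ _ hklen,
    aux_toNat_ite, aux_toNat_ite, aux_toNat_ite, aux_toNat_ite,
    aux_ite_inCirc _ _ _ (Int.fract_nonneg _) (Int.fract_lt_one _)
      (Int.fract_nonneg _) (Int.fract_lt_one _) (Int.fract_nonneg _) (Int.fract_lt_one _),
    aux_ite_inCirc _ _ _ (Int.fract_nonneg _) (Int.fract_lt_one _)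
      (Int.fract_nonneg _) (Int.fract_lt_one _) (Int.fract_nonneg _) (Int.fract_lt_one _),
    aux_ite_inCirc _ _ _ hβ0 hβ1 (Int.fract_nonneg _) (Int.fract_lt_one _)
      (Int.fract_nonneg _) (Int.fract_lt_one _),
    aux_ite_inCirc _ _ _ hγ0 hγ1 (Int.fract_nonneg _) (Int.fract_lt_one _)
      (Int.fract_nonneg _) (Int.fract_lt_one _)]
  simp only [aux_fract_fract_sub, aux_fract_sub_fract', aux_fract_sub_fract]
  have e1 : ((k + 1 : ℕ) : ℝ) * α - (β + α) = (k:ℝ) * α - β := by push_cast; ring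
  have e2 : (k:ℝ) * α - (β + α) = (k:ℝ) * α - β - α := by ring
  have e3 : γ + α - (β + α) = γ - β := by ring
  have e4 : β + α - β = α := by ring
  have e5 : γ + α - γ = α := by ring
  rw [e1, e2, e3, e4, e5, Int.fract_eq_self.2 ⟨hα0, hα1⟩]
  exact aux_key α β γ ((k:ℝ) * α) hα0 hα1
end
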